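/- Let p = 3 and X_1 = X_2 = X_3 = {0,1}. Let M be the set of strictly positive probability mass functions P on {0,1}³ such that P(X_3 = x | X_1 = 0, X_2 = 0) = P(X_3 = x | X_1 = 1, X_2 = 1) for all x ∈ {0,1}. Then there is no directed acyclic graph G on vertex set {1,2,3} whose Bayesian network model M_G equals M. (M is a staged tree model that is not equivalent to any Bayesian network.) -/

import Mathlib

/-!
Encoding: joint probability mass functions of three binary variables
`(X_1, X_2, X_3)` are real-valued functions on `Fin 3 → Bool`.  A depth-(i-1)
vertex (context `v ∈ X_1 × … × X_{i-1}`) is represented by a full assignment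
of which only the coordinates `k < i` are relevant.
-/

/-- `v` and `w` agree on all coordinates below `i`. -/
def agreeBelow (i : Fin 3) (v w : Fin 3 → Bool) : Prop :=
  ∀ k : Fin 3, k < i → v k = w k

open Classical in
/-- The conditional probability `P(X_i = x | (X_1,…,X_{i-1}) = v)`: the ratio of the
marginal of `(X_1,…,X_i)` at `(v, x)` to the marginal of `(X_1,…,X_{i-1})` at `v`. -/
noncomputable def condProb (P : (Fin 3 → Bool) → ℝ) (i : Fin 3) (v : Fin 3 → Bool)
    (x : Bool) : ℝ :=
  (∑ u : Fin 3 → Bool, if agreeBelow i u v ∧ u i = x then P u else 0) /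
    (∑ u : Fin 3 → Bool, if agreeBelow i u v then P u else 0)

open Classical in
/-- The marginal `P(X_A = v_A)` of the coordinates in the finite set `A` at `v`. -/
noncomputable def margSet (P : (Fin 3 → Bool) → ℝ) (A : Finset (Fin 3))
    (v : Fin 3 → Bool) : ℝ :=
  ∑ u : Fin 3 → Bool, if ∀ k ∈ A, u k = v k then P u else 0

/-- `P` is Markov to the DAG `G` with parent map `Par` (with `Par i ⊆ {1,2,3} \ {i}`):
`P x = ∏ i, P(X_i = x_i | X_{Par i} = x_{Par i})` for all `x`, where the conditional
probabilities are ratios of the corresponding marginals. -/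
noncomputable def Markov (Par : Fin 3 → Finset (Fin 3))
    (P : (Fin 3 → Bool) → ℝ) : Prop :=
  ∀ x : Fin 3 → Bool,
    P x = ∏ i : Fin 3, margSet P (insert i (Par i)) x / margSet P (Par i) x

lemma sum8 (f : (Fin 3 → Bool) → ℝ) :
    ∑ u : Fin 3 → Bool, f u =
      f ![false,false,false] + f ![false,false,true] + f ![false,true,false] +
      f ![false,true,true] + f ![true,false,false] + f ![true,false,true] +
      f ![true,true,false] + f ![true,true,true] := by
  rw [show (Finset.univ : Finset (Fin 3 → Bool)) =
      {![false,false,false], ![false,false,true], ![false,true,false], ![false,true,true],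
       ![true,false,false], ![true,false,true], ![true,true,false], ![true,true,true]} by decide]
  rw [Finset.sum_insert (by decide), Finset.sum_insert (by decide),
      Finset.sum_insert (by decide), Finset.sum_insert (by decide),
      Finset.sum_insert (by decide), Finset.sum_insert (by decide),
      Finset.sum_insert (by decide), Finset.sum_singleton]
  ring

noncomputable def pb : Bool → Bool → Bool → ℝ
  | false, false, false => 12/96
  | false, false, true  => 12/96
  | false, true,  false => 16/96
  | false, true,  true  => 8/96
  | true,  false, false => 9/96
  | true,  false, true  => 3/96
  | true,  true,  false => 18/96
  | true,  true,  true  => 18/96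

noncomputable def pc : Bool → Bool → Bool → ℝ
  | false, false, false => 2/36
  | false, false, true  => 3/36
  | false, true,  false => 4/36
  | false, true,  true  => 5/36
  | true,  false, false => 6/36
  | true,  false, true  => 7/36
  | true,  true,  false => 8/36
  | true,  true,  true  => 1/36

noncomputable def PBf : (Fin 3 → Bool) → ℝ := fun u => pb (u 0) (u 1) (u 2)
noncomputable def PCf : (Fin 3 → Bool) → ℝ := fun u => pc (u 0) (u 1) (u 2)

lemma PBf_pos : ∀ x, 0 < PBf x := by
  intro x
  simp only [PBf]
  cases h0 : x 0 <;> cases h1 : x 1 <;> cases h2 : x 2 <;> norm_num [pb]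

lemma PCf_pos : ∀ x, 0 < PCf x := by
  intro x
  simp only [PCf]
  cases h0 : x 0 <;> cases h1 : x 1 <;> cases h2 : x 2 <;> norm_num [pc]

lemma PBf_sum : ∑ x, PBf x = 1 := by rw [sum8]; norm_num [PBf, pb, Matrix.cons_val_two]

lemma PCf_sum : ∑ x, PCf x = 1 := by rw [sum8]; norm_num [PCf, pc, Matrix.cons_val_two]

set_option maxHeartbeats 1000000 in
lemma PBf_mem : ∀ x : Bool, condProb PBf 2 (fun _ => false) x
    = condProb PBf 2 (fun _ => true) x := by
  intro x
  cases x <;>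
  · simp only [condProb, sum8]
    norm_num [PBf, pb, Matrix.cons_val_two, agreeBelow, Fin.forall_fin_succ, Fin.lt_def]

set_option maxHeartbeats 1000000 in
lemma PCf_notmem : ¬ (∀ x : Bool, condProb PCf 2 (fun _ => false) x
    = condProb PCf 2 (fun _ => true) x) := by
  intro h
  have := h true
  simp only [condProb, sum8] at this
  norm_num [PCf, pc, Matrix.cons_val_two, agreeBelow, Fin.forall_fin_succ, Fin.lt_def] at this

lemma fcases0 : ∀ S : Finset (Fin 3), 0 ∉ S →
    S = ∅ ∨ S = {1} ∨ S = {2} ∨ S = {1, 2} := by decide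

lemma fcases1 : ∀ S : Finset (Fin 3), 1 ∉ S →
    S = ∅ ∨ S = {0} ∨ S = {2} ∨ S = {0, 2} := by decide

lemma fcases2 : ∀ S : Finset (Fin 3), 2 ∉ S →
    S = ∅ ∨ S = {0} ∨ S = {1} ∨ S = {0, 1} := by decide

set_option maxHeartbeats 1000000 in
lemma nc0 (Par : Fin 3 → Finset (Fin 3)) (hA : Par 0 = (∅ : Finset (Fin 3))) (hB : Par 1 = (∅ : Finset (Fin 3))) (hC : Par 2 = (∅ : Finset (Fin 3))) (h : Markov Par PBf) : False := by
  have hm := h ![false, false, false]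
  simp only [Fin.prod_univ_three, hA, hB, hC, margSet, sum8] at hm
  norm_num [PBf, pb, Matrix.cons_val_two] at hm

set_option maxHeartbeats 1000000 in
lemma nc1 (Par : Fin 3 → Finset (Fin 3)) (hA : Par 0 = (∅ : Finset (Fin 3))) (hB : Par 1 = (∅ : Finset (Fin 3))) (hC : Par 2 = ({0} : Finset (Fin 3))) (h : Markov Par PBf) : False := by
  have hm := h ![false, false, false]
  simp only [Fin.prod_univ_three, hA, hB, hC, margSet, sum8] at hm
  norm_num [PBf, pb, Matrix.cons_val_two] at hm

set_option maxHeartbeats 1000000 in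
lemma nc2 (Par : Fin 3 → Finset (Fin 3)) (hA : Par 0 = (∅ : Finset (Fin 3))) (hB : Par 1 = (∅ : Finset (Fin 3))) (hC : Par 2 = ({1} : Finset (Fin 3))) (h : Markov Par PBf) : False := by
  have hm := h ![false, false, false]
  simp only [Fin.prod_univ_three, hA, hB, hC, margSet, sum8] at hm
  norm_num [PBf, pb, Matrix.cons_val_two] at hm

set_option maxHeartbeats 1000000 in
lemma nc3 (Par : Fin 3 → Finset (Fin 3)) (hA : Par 0 = (∅ : Finset (Fin 3))) (hB : Par 1 = (∅ : Finset (Fin 3))) (hC : Par 2 = ({0, 1} : Finset (Fin 3))) (h : Markov Par PBf) : False := by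
  have hm := h ![false, false, false]
  simp only [Fin.prod_univ_three, hA, hB, hC, margSet, sum8] at hm
  norm_num [PBf, pb, Matrix.cons_val_two] at hm

set_option maxHeartbeats 1000000 in
lemma nc4 (Par : Fin 3 → Finset (Fin 3)) (hA : Par 0 = (∅ : Finset (Fin 3))) (hB : Par 1 = ({0} : Finset (Fin 3))) (hC : Par 2 = (∅ : Finset (Fin 3))) (h : Markov Par PBf) : False := by
  have hm := h ![false, false, false]
  simp only [Fin.prod_univ_three, hA, hB, hC, margSet, sum8] at hm
  norm_num [PBf, pb, Matrix.cons_val_two] at hm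

set_option maxHeartbeats 1000000 in
lemma nc5 (Par : Fin 3 → Finset (Fin 3)) (hA : Par 0 = (∅ : Finset (Fin 3))) (hB : Par 1 = ({0} : Finset (Fin 3))) (hC : Par 2 = ({0} : Finset (Fin 3))) (h : Markov Par PBf) : False := by
  have hm := h ![false, false, false]
  simp only [Fin.prod_univ_three, hA, hB, hC, margSet, sum8] at hm
  norm_num [PBf, pb, Matrix.cons_val_two] at hm

set_option maxHeartbeats 1000000 in
lemma nc6 (Par : Fin 3 → Finset (Fin 3)) (hA : Par 0 = (∅ : Finset (Fin 3))) (hB : Par 1 = ({0} : Finset (Fin 3))) (hC : Par 2 = ({1} : Finset (Fin 3))) (h : Markov Par PBf) : False := by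
  have hm := h ![false, false, false]
  simp only [Fin.prod_univ_three, hA, hB, hC, margSet, sum8] at hm
  norm_num [PBf, pb, Matrix.cons_val_two] at hm

set_option maxHeartbeats 2000000 in
lemma cp7 (Par : Fin 3 → Finset (Fin 3)) (hA : Par 0 = (∅ : Finset (Fin 3))) (hB : Par 1 = ({0} : Finset (Fin 3))) (hC : Par 2 = ({0, 1} : Finset (Fin 3))) : Markov Par PCf := by
  intro x
  have hx : x = ![x 0, x 1, x 2] := by funext k; fin_cases k <;> rfl
  rw [hx]
  cases h0 : x 0 <;> cases h1 : x 1 <;> cases h2 : x 2 <;>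
  · simp only [Fin.prod_univ_three, hA, hB, hC, margSet, sum8]
    norm_num [PCf, pc, Matrix.cons_val_two]

set_option maxHeartbeats 1000000 in
lemma nc8 (Par : Fin 3 → Finset (Fin 3)) (hA : Par 0 = (∅ : Finset (Fin 3))) (hB : Par 1 = ({2} : Finset (Fin 3))) (hC : Par 2 = (∅ : Finset (Fin 3))) (h : Markov Par PBf) : False := by
  have hm := h ![false, false, false]
  simp only [Fin.prod_univ_three, hA, hB, hC, margSet, sum8] at hm
  norm_num [PBf, pb, Matrix.cons_val_two] at hm

set_option maxHeartbeats 1000000 in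
lemma nc9 (Par : Fin 3 → Finset (Fin 3)) (hA : Par 0 = (∅ : Finset (Fin 3))) (hB : Par 1 = ({2} : Finset (Fin 3))) (hC : Par 2 = ({0} : Finset (Fin 3))) (h : Markov Par PBf) : False := by
  have hm := h ![false, false, false]
  simp only [Fin.prod_univ_three, hA, hB, hC, margSet, sum8] at hm
  norm_num [PBf, pb, Matrix.cons_val_two] at hm

set_option maxHeartbeats 1000000 in
lemma nc10 (Par : Fin 3 → Finset (Fin 3)) (hA : Par 0 = (∅ : Finset (Fin 3))) (hB : Par 1 = ({0, 2} : Finset (Fin 3))) (hC : Par 2 = (∅ : Finset (Fin 3))) (h : Markov Par PBf) : False := by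
  have hm := h ![false, false, false]
  simp only [Fin.prod_univ_three, hA, hB, hC, margSet, sum8] at hm
  norm_num [PBf, pb, Matrix.cons_val_two] at hm

set_option maxHeartbeats 2000000 in
lemma cp11 (Par : Fin 3 → Finset (Fin 3)) (hA : Par 0 = (∅ : Finset (Fin 3))) (hB : Par 1 = ({0, 2} : Finset (Fin 3))) (hC : Par 2 = ({0} : Finset (Fin 3))) : Markov Par PCf := by
  intro x
  have hx : x = ![x 0, x 1, x 2] := by funext k; fin_cases k <;> rfl
  rw [hx]
  cases h0 : x 0 <;> cases h1 : x 1 <;> cases h2 : x 2 <;>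
  · simp only [Fin.prod_univ_three, hA, hB, hC, margSet, sum8]
    norm_num [PCf, pc, Matrix.cons_val_two]

set_option maxHeartbeats 1000000 in
lemma nc12 (Par : Fin 3 → Finset (Fin 3)) (hA : Par 0 = ({1} : Finset (Fin 3))) (hB : Par 1 = (∅ : Finset (Fin 3))) (hC : Par 2 = (∅ : Finset (Fin 3))) (h : Markov Par PBf) : False := by
  have hm := h ![false, false, false]
  simp only [Fin.prod_univ_three, hA, hB, hC, margSet, sum8] at hm
  norm_num [PBf, pb, Matrix.cons_val_two] at hm

set_option maxHeartbeats 1000000 in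
lemma nc13 (Par : Fin 3 → Finset (Fin 3)) (hA : Par 0 = ({1} : Finset (Fin 3))) (hB : Par 1 = (∅ : Finset (Fin 3))) (hC : Par 2 = ({0} : Finset (Fin 3))) (h : Markov Par PBf) : False := by
  have hm := h ![false, false, false]
  simp only [Fin.prod_univ_three, hA, hB, hC, margSet, sum8] at hm
  norm_num [PBf, pb, Matrix.cons_val_two] at hm

set_option maxHeartbeats 1000000 in
lemma nc14 (Par : Fin 3 → Finset (Fin 3)) (hA : Par 0 = ({1} : Finset (Fin 3))) (hB : Par 1 = (∅ : Finset (Fin 3))) (hC : Par 2 = ({1} : Finset (Fin 3))) (h : Markov Par PBf) : False := by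
  have hm := h ![false, false, false]
  simp only [Fin.prod_univ_three, hA, hB, hC, margSet, sum8] at hm
  norm_num [PBf, pb, Matrix.cons_val_two] at hm

set_option maxHeartbeats 2000000 in
lemma cp15 (Par : Fin 3 → Finset (Fin 3)) (hA : Par 0 = ({1} : Finset (Fin 3))) (hB : Par 1 = (∅ : Finset (Fin 3))) (hC : Par 2 = ({0, 1} : Finset (Fin 3))) : Markov Par PCf := by
  intro x
  have hx : x = ![x 0, x 1, x 2] := by funext k; fin_cases k <;> rfl
  rw [hx]
  cases h0 : x 0 <;> cases h1 : x 1 <;> cases h2 : x 2 <;>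
  · simp only [Fin.prod_univ_three, hA, hB, hC, margSet, sum8]
    norm_num [PCf, pc, Matrix.cons_val_two]

set_option maxHeartbeats 1000000 in
lemma nc16 (Par : Fin 3 → Finset (Fin 3)) (hA : Par 0 = ({1} : Finset (Fin 3))) (hB : Par 1 = ({2} : Finset (Fin 3))) (hC : Par 2 = (∅ : Finset (Fin 3))) (h : Markov Par PBf) : False := by
  have hm := h ![false, false, false]
  simp only [Fin.prod_univ_three, hA, hB, hC, margSet, sum8] at hm
  norm_num [PBf, pb, Matrix.cons_val_two] at hm

set_option maxHeartbeats 1000000 in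
lemma nc17 (Par : Fin 3 → Finset (Fin 3)) (hA : Par 0 = ({2} : Finset (Fin 3))) (hB : Par 1 = (∅ : Finset (Fin 3))) (hC : Par 2 = (∅ : Finset (Fin 3))) (h : Markov Par PBf) : False := by
  have hm := h ![false, false, false]
  simp only [Fin.prod_univ_three, hA, hB, hC, margSet, sum8] at hm
  norm_num [PBf, pb, Matrix.cons_val_two] at hm

set_option maxHeartbeats 1000000 in
lemma nc18 (Par : Fin 3 → Finset (Fin 3)) (hA : Par 0 = ({2} : Finset (Fin 3))) (hB : Par 1 = (∅ : Finset (Fin 3))) (hC : Par 2 = ({1} : Finset (Fin 3))) (h : Markov Par PBf) : False := by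
  have hm := h ![false, false, false]
  simp only [Fin.prod_univ_three, hA, hB, hC, margSet, sum8] at hm
  norm_num [PBf, pb, Matrix.cons_val_two] at hm

set_option maxHeartbeats 1000000 in
lemma nc19 (Par : Fin 3 → Finset (Fin 3)) (hA : Par 0 = ({2} : Finset (Fin 3))) (hB : Par 1 = ({0} : Finset (Fin 3))) (hC : Par 2 = (∅ : Finset (Fin 3))) (h : Markov Par PBf) : False := by
  have hm := h ![false, false, false]
  simp only [Fin.prod_univ_three, hA, hB, hC, margSet, sum8] at hm
  norm_num [PBf, pb, Matrix.cons_val_two] at hm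

set_option maxHeartbeats 1000000 in
lemma nc20 (Par : Fin 3 → Finset (Fin 3)) (hA : Par 0 = ({2} : Finset (Fin 3))) (hB : Par 1 = ({2} : Finset (Fin 3))) (hC : Par 2 = (∅ : Finset (Fin 3))) (h : Markov Par PBf) : False := by
  have hm := h ![false, false, false]
  simp only [Fin.prod_univ_three, hA, hB, hC, margSet, sum8] at hm
  norm_num [PBf, pb, Matrix.cons_val_two] at hm

set_option maxHeartbeats 2000000 in
lemma cp21 (Par : Fin 3 → Finset (Fin 3)) (hA : Par 0 = ({2} : Finset (Fin 3))) (hB : Par 1 = ({0, 2} : Finset (Fin 3))) (hC : Par 2 = (∅ : Finset (Fin 3))) : Markov Par PCf := by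
  intro x
  have hx : x = ![x 0, x 1, x 2] := by funext k; fin_cases k <;> rfl
  rw [hx]
  cases h0 : x 0 <;> cases h1 : x 1 <;> cases h2 : x 2 <;>
  · simp only [Fin.prod_univ_three, hA, hB, hC, margSet, sum8]
    norm_num [PCf, pc, Matrix.cons_val_two]

set_option maxHeartbeats 1000000 in
lemma nc22 (Par : Fin 3 → Finset (Fin 3)) (hA : Par 0 = ({1, 2} : Finset (Fin 3))) (hB : Par 1 = (∅ : Finset (Fin 3))) (hC : Par 2 = (∅ : Finset (Fin 3))) (h : Markov Par PBf) : False := by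
  have hm := h ![false, false, false]
  simp only [Fin.prod_univ_three, hA, hB, hC, margSet, sum8] at hm
  norm_num [PBf, pb, Matrix.cons_val_two] at hm

set_option maxHeartbeats 2000000 in
lemma cp23 (Par : Fin 3 → Finset (Fin 3)) (hA : Par 0 = ({1, 2} : Finset (Fin 3))) (hB : Par 1 = (∅ : Finset (Fin 3))) (hC : Par 2 = ({1} : Finset (Fin 3))) : Markov Par PCf := by
  intro x
  have hx : x = ![x 0, x 1, x 2] := by funext k; fin_cases k <;> rfl
  rw [hx]
  cases h0 : x 0 <;> cases h1 : x 1 <;> cases h2 : x 2 <;>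
  · simp only [Fin.prod_univ_three, hA, hB, hC, margSet, sum8]
    norm_num [PCf, pc, Matrix.cons_val_two]

set_option maxHeartbeats 2000000 in
lemma cp24 (Par : Fin 3 → Finset (Fin 3)) (hA : Par 0 = ({1, 2} : Finset (Fin 3))) (hB : Par 1 = ({2} : Finset (Fin 3))) (hC : Par 2 = (∅ : Finset (Fin 3))) : Markov Par PCf := by
  intro x
  have hx : x = ![x 0, x 1, x 2] := by funext k; fin_cases k <;> rfl
  rw [hx]
  cases h0 : x 0 <;> cases h1 : x 1 <;> cases h2 : x 2 <;>
  · simp only [Fin.prod_univ_three, hA, hB, hC, margSet, sum8]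
    norm_num [PCf, pc, Matrix.cons_val_two]

set_option maxHeartbeats 1000000 in
/--
Let `M` be the set of strictly positive probability mass functions `P` on `{0,1}³`
such that `P(X_3 = x | X_1 = 0, X_2 = 0) = P(X_3 = x | X_1 = 1, X_2 = 1)` for all
`x ∈ {0,1}`.  There is no directed acyclic graph `G` on `{1,2,3}` (given by a
parent map `Par` admitting a topological order `π`) whose Bayesian network model
`M_G` equals `M`: `M` is a staged tree model not equivalent to any Bayesian network.
-/
theorem no_BN_equals_swap_staged_tree_model :
    ¬ ∃ Par : Fin 3 → Finset (Fin 3),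
        (∃ π : Equiv.Perm (Fin 3), ∀ i : Fin 3, ∀ j ∈ Par i, π.symm j < π.symm i) ∧
        (∀ P : (Fin 3 → Bool) → ℝ, (∀ x, 0 < P x) → (∑ x, P x = 1) →
          (Markov Par P ↔
            ∀ x : Bool,
              condProb P 2 (fun _ => false) x = condProb P 2 (fun _ => true) x)) := by
  rintro ⟨Par, ⟨π, hπ⟩, hiff⟩
  have hirr : ∀ i, i ∉ Par i := fun i h => lt_irrefl _ (hπ i i h)
  have hanti : ∀ i j, j ∈ Par i → i ∈ Par j → False :=
    fun i j h1 h2 => lt_asymm (hπ i j h1) (hπ j i h2)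
  have hcyc1 : (1 : Fin 3) ∈ Par 0 → (2 : Fin 3) ∈ Par 1 → (0 : Fin 3) ∈ Par 2 → False :=
    fun h1 h2 h3 => lt_irrefl _ (((hπ 2 0 h3).trans (hπ 1 2 h2)).trans (hπ 0 1 h1))
  have hcyc2 : (2 : Fin 3) ∈ Par 0 → (0 : Fin 3) ∈ Par 1 → (1 : Fin 3) ∈ Par 2 → False :=
    fun h1 h2 h3 => lt_irrefl _ (((hπ 1 0 h2).trans (hπ 2 1 h3)).trans (hπ 0 2 h1))
  rcases fcases0 (Par 0) (hirr 0) with hA | hA | hA | hA <;>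
  rcases fcases1 (Par 1) (hirr 1) with hB | hB | hB | hB <;>
  rcases fcases2 (Par 2) (hirr 2) with hC | hC | hC | hC <;>
  first
  | exact hanti 0 1 (by rw [hA]; decide) (by rw [hB]; decide)
  | exact hanti 0 2 (by rw [hA]; decide) (by rw [hC]; decide)
  | exact hanti 1 2 (by rw [hB]; decide) (by rw [hC]; decide)
  | exact hcyc1 (by rw [hA]; decide) (by rw [hB]; decide) (by rw [hC]; decide)
  | exact hcyc2 (by rw [hA]; decide) (by rw [hB]; decide) (by rw [hC]; decide)
  | exact nc0 Par hA hB hC ((hiff PBf PBf_pos PBf_sum).mpr PBf_mem)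
  | exact nc1 Par hA hB hC ((hiff PBf PBf_pos PBf_sum).mpr PBf_mem)
  | exact nc2 Par hA hB hC ((hiff PBf PBf_pos PBf_sum).mpr PBf_mem)
  | exact nc3 Par hA hB hC ((hiff PBf PBf_pos PBf_sum).mpr PBf_mem)
  | exact nc4 Par hA hB hC ((hiff PBf PBf_pos PBf_sum).mpr PBf_mem)
  | exact nc5 Par hA hB hC ((hiff PBf PBf_pos PBf_sum).mpr PBf_mem)
  | exact nc6 Par hA hB hC ((hiff PBf PBf_pos PBf_sum).mpr PBf_mem)
  | exact PCf_notmem ((hiff PCf PCf_pos PCf_sum).mp (cp7 Par hA hB hC))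
  | exact nc8 Par hA hB hC ((hiff PBf PBf_pos PBf_sum).mpr PBf_mem)
  | exact nc9 Par hA hB hC ((hiff PBf PBf_pos PBf_sum).mpr PBf_mem)
  | exact nc10 Par hA hB hC ((hiff PBf PBf_pos PBf_sum).mpr PBf_mem)
  | exact PCf_notmem ((hiff PCf PCf_pos PCf_sum).mp (cp11 Par hA hB hC))
  | exact nc12 Par hA hB hC ((hiff PBf PBf_pos PBf_sum).mpr PBf_mem)
  | exact nc13 Par hA hB hC ((hiff PBf PBf_pos PBf_sum).mpr PBf_mem)
  | exact nc14 Par hA hB hC ((hiff PBf PBf_pos PBf_sum).mpr PBf_mem)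
  | exact PCf_notmem ((hiff PCf PCf_pos PCf_sum).mp (cp15 Par hA hB hC))
  | exact nc16 Par hA hB hC ((hiff PBf PBf_pos PBf_sum).mpr PBf_mem)
  | exact nc17 Par hA hB hC ((hiff PBf PBf_pos PBf_sum).mpr PBf_mem)
  | exact nc18 Par hA hB hC ((hiff PBf PBf_pos PBf_sum).mpr PBf_mem)
  | exact nc19 Par hA hB hC ((hiff PBf PBf_pos PBf_sum).mpr PBf_mem)
  | exact nc20 Par hA hB hC ((hiff PBf PBf_pos PBf_sum).mpr PBf_mem)
  | exact PCf_notmem ((hiff PCf PCf_pos PCf_sum).mp (cp21 Par hA hB hC))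
  | exact nc22 Par hA hB hC ((hiff PBf PBf_pos PBf_sum).mpr PBf_mem)
  | exact PCf_notmem ((hiff PCf PCf_pos PCf_sum).mp (cp23 Par hA hB hC))
  | exact PCf_notmem ((hiff PCf PCf_pos PCf_sum).mp (cp24 Par hA hB hC))
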